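/- arXiv:2404.00157 — 3 statements merged into one kernel-verified Lean document; each statement's English description precedes it below -/
import Mathlib

section
/- Let f : ℝ → [0,∞) be measurable, let φ₁,…,φ_{m₁} be an orthonormal family of L²(ℝ, dx) with ∫ φ_j(x)² f(x) dx < ∞ for each j, and let ψ₁,…,ψ_{m₂} be an orthonormal family of L²(ℝ, dy). Suppose the Gram matrix Ψ = (∫ φ_j φ_{j'} f dx)_{j,j'} is invertible. Then for every Θ ∈ M_{m₁,m₂}(ℝ), the function τ(x,y) = Σ_{j,ℓ} Θ_{jℓ} φ_j(x) ψ_ℓ(y) satisfies ∫∫ τ(x,y)² dx dy ≤ ‖Ψ⁻¹‖_op ∫∫ τ(x,y)² f(x) dx dy, where ‖·‖_op denotes the spectral norm. -/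
open MeasureTheory Real Matrix

/-- Product of two L² functions is integrable. -/
lemma aux_integrable_mul {g h : ℝ → ℝ} (hg : MemLp g 2 (volume : Measure ℝ))
    (hh : MemLp h 2 (volume : Measure ℝ)) :
    Integrable (fun x => g x * h x) (volume : Measure ℝ) := by
  apply Integrable.mono' (((hg.integrable_sq.add hh.integrable_sq).const_mul (1/2)))
    (hg.aestronglyMeasurable.mul hh.aestronglyMeasurable)
  filter_upwards with x
  simp only [Pi.add_apply, Pi.mul_apply, Real.norm_eq_abs, abs_mul]
  nlinarith [sq_nonneg (|g x| - |h x|), sq_abs (g x), sq_abs (h x), abs_nonneg (g x),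
    abs_nonneg (h x)]

/-- Expansion of an integral of a product of two finite linear combinations against a weight. -/
lemma aux_integral_expand {m : ℕ} (g : Fin m → ℝ → ℝ) (w : ℝ → ℝ) (a b : Fin m → ℝ)
    (hint : ∀ j j', Integrable (fun x => g j x * g j' x * w x) (volume : Measure ℝ)) :
    ∫ x, (∑ j, a j * g j x) * (∑ j, b j * g j x) * w x
      = ∑ j, ∑ j', a j * b j' * ∫ x, g j x * g j' x * w x := by
  have hptw : ∀ x, (∑ j, a j * g j x) * (∑ j, b j * g j x) * w x
      = ∑ j, ∑ j', a j * b j' * (g j x * g j' x * w x) := by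
    intro x
    rw [Finset.sum_mul_sum, Finset.sum_mul]
    refine Finset.sum_congr rfl fun j _ => ?_
    rw [Finset.sum_mul]
    exact Finset.sum_congr rfl fun j' _ => by ring
  simp_rw [hptw]
  rw [integral_finset_sum _ (fun j _ =>
    integrable_finset_sum _ (fun j' _ => ((hint j j').const_mul _)))]
  refine Finset.sum_congr rfl fun j _ => ?_
  rw [integral_finset_sum _ (fun j' _ => ((hint j j').const_mul _))]
  exact Finset.sum_congr rfl fun j' _ => integral_const_mul _ _

/-- Unweighted version. -/
lemma aux_integral_expand' {m : ℕ} (g : Fin m → ℝ → ℝ) (a b : Fin m → ℝ)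
    (hint : ∀ j j', Integrable (fun x => g j x * g j' x) (volume : Measure ℝ)) :
    ∫ x, (∑ j, a j * g j x) * (∑ j, b j * g j x)
      = ∑ j, ∑ j', a j * b j' * ∫ x, g j x * g j' x := by
  have := aux_integral_expand g (fun _ => (1:ℝ)) a b (by simpa using hint)
  simpa using this

/-- The key matrix inequality: for a symmetric positive semidefinite invertible matrix `Ψ`,
`‖v‖² ≤ ‖Ψ⁻¹‖ * vᵀ Ψ v`. -/
lemma aux_matrix_key {m : ℕ} (Ψ : Matrix (Fin m) (Fin m) ℝ)
    (hsym : ∀ j j', Ψ j j' = Ψ j' j)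
    (hpos : ∀ v : Fin m → ℝ, 0 ≤ ∑ j, ∑ j', v j * Ψ j j' * v j')
    (hinv : IsUnit Ψ) (v : Fin m → ℝ) :
    ∑ j, v j ^ 2 ≤ ‖Matrix.toEuclideanCLM (𝕜 := ℝ) Ψ⁻¹‖ *
      ∑ j, ∑ j', v j * Ψ j j' * v j' := by
  classical
  set T := Matrix.toEuclideanCLM (𝕜 := ℝ) Ψ with hT
  set S := Matrix.toEuclideanCLM (𝕜 := ℝ) Ψ⁻¹ with hS
  have hdet : IsUnit Ψ.det := (Matrix.isUnit_iff_isUnit_det Ψ).mp hinv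
  -- apply formula
  have happly : ∀ (x : EuclideanSpace ℝ (Fin m)) (j : Fin m),
      T x j = ∑ k, Ψ j k * x k := by
    intro x j
    have := congrFun (Matrix.ofLp_toEuclideanCLM (𝕜 := ℝ) Ψ x) j
    rw [this]; simp [Matrix.mulVec, dotProduct]
  have hinner : ∀ (a b : EuclideanSpace ℝ (Fin m)),
      (inner ℝ a (T b) : ℝ) = ∑ j, ∑ k, a j * Ψ j k * b k := by
    intro a b
    rw [PiLp.inner_apply]
    refine Finset.sum_congr rfl fun j _ => ?_
    rw [RCLike.inner_apply, starRingEnd_apply, star_trivial, happly, Finset.sum_mul]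
    exact Finset.sum_congr rfl fun k _ => by ring
  have hinner' : ∀ (a b : EuclideanSpace ℝ (Fin m)),
      (inner ℝ (T a) b : ℝ) = ∑ j, ∑ k, b j * Ψ j k * a k := by
    intro a b
    rw [real_inner_comm]; exact hinner b a
  have hTsym : ∀ (a b : EuclideanSpace ℝ (Fin m)),
      (inner ℝ (T a) b : ℝ) = inner ℝ a (T b) := by
    intro a b
    rw [hinner', hinner, Finset.sum_comm]
    exact Finset.sum_congr rfl fun j _ => Finset.sum_congr rfl fun k _ => by
      rw [hsym j k]; ring
  have hST : ∀ x : EuclideanSpace ℝ (Fin m), S (T x) = x := by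
    intro x
    have h1 : S * T = 1 := by
      rw [hS, hT, ← _root_.map_mul, Matrix.nonsing_inv_mul Ψ hdet, _root_.map_one]
    calc S (T x) = (S * T) x := rfl
    _ = x := by rw [h1]; rfl
  have hTS : ∀ x : EuclideanSpace ℝ (Fin m), T (S x) = x := by
    intro x
    have h1 : T * S = 1 := by
      rw [hS, hT, ← _root_.map_mul, Matrix.mul_nonsing_inv Ψ hdet, _root_.map_one]
    calc T (S x) = (T * S) x := rfl
    _ = x := by rw [h1]; rfl
  have hposE : ∀ x : EuclideanSpace ℝ (Fin m), 0 ≤ (inner ℝ x (T x) : ℝ) := by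
    intro x
    rw [hinner]
    exact hpos (fun j => x j)
  -- Cauchy-Schwarz for the bilinear form ⟨·, T ·⟩
  have hCS : ∀ (a b : EuclideanSpace ℝ (Fin m)),
      (inner ℝ a (T b) : ℝ) ^ 2 ≤ (inner ℝ a (T a) : ℝ) * (inner ℝ b (T b) : ℝ) := by
    intro a b
    have hquad : ∀ t : ℝ, 0 ≤ (inner ℝ b (T b) : ℝ) * (t * t)
        + (2 * (inner ℝ a (T b) : ℝ)) * t + (inner ℝ a (T a) : ℝ) := by
      intro t
      have h0 := hposE (a + t • b)
      have hexp : (inner ℝ (a + t • b) (T (a + t • b)) : ℝ)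
          = (inner ℝ b (T b) : ℝ) * (t * t) + (2 * (inner ℝ a (T b) : ℝ)) * t
            + (inner ℝ a (T a) : ℝ) := by
        have hba : (inner ℝ b (T a) : ℝ) = inner ℝ a (T b) := by
          rw [← hTsym a b, real_inner_comm]
        rw [map_add, _root_.map_smul, inner_add_left, inner_add_right, inner_add_right,
          real_inner_smul_left, real_inner_smul_right, real_inner_smul_left,
          real_inner_smul_right, hba]
        ring
      linarith [hexp ▸ h0]
    have hd := discrim_le_zero hquad
    rw [discrim] at hd
    nlinarith [hd]
  -- put v into EuclideanSpace
  set ev : EuclideanSpace ℝ (Fin m) := (WithLp.equiv 2 (Fin m → ℝ)).symm v with hev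
  have hevj : ∀ j, ev j = v j := fun j => rfl
  have hQ : (inner ℝ ev (T ev) : ℝ) = ∑ j, ∑ j', v j * Ψ j j' * v j' := by
    rw [hinner]
    exact Finset.sum_congr rfl fun j _ => Finset.sum_congr rfl fun k _ => by
      rw [hevj, hevj]
  have hN : (inner ℝ ev ev : ℝ) = ∑ j, v j ^ 2 := by
    rw [PiLp.inner_apply]
    exact Finset.sum_congr rfl fun j _ => by
      rw [RCLike.inner_apply, starRingEnd_apply, star_trivial, hevj]; ring
  have hkey : (inner ℝ ev ev : ℝ) ^ 2
      ≤ (‖S‖ * ‖ev‖ * ‖ev‖) * (inner ℝ ev (T ev) : ℝ) := by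
    have h1 : (inner ℝ (S ev) (T ev) : ℝ) = inner ℝ ev ev := by
      rw [← hTsym (S ev) ev, hTS]
    have h2 := hCS (S ev) ev
    rw [h1] at h2
    have h3 : (inner ℝ (S ev) (T (S ev)) : ℝ) ≤ ‖S‖ * ‖ev‖ * ‖ev‖ := by
      rw [hTS]
      calc (inner ℝ (S ev) ev : ℝ) ≤ ‖S ev‖ * ‖ev‖ := real_inner_le_norm _ _
      _ ≤ (‖S‖ * ‖ev‖) * ‖ev‖ := by
          have := S.le_opNorm ev
          have h0 : (0:ℝ) ≤ ‖ev‖ := norm_nonneg _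
          nlinarith
      _ = ‖S‖ * ‖ev‖ * ‖ev‖ := by ring
    have h4 : (0:ℝ) ≤ (inner ℝ ev (T ev) : ℝ) := hposE ev
    nlinarith [h2, h3, h4]
  have hnorm : (inner ℝ ev ev : ℝ) = ‖ev‖ ^ 2 := real_inner_self_eq_norm_sq ev
  rw [← hQ, ← hN]
  by_cases hz : ‖ev‖ = 0
  · have : (inner ℝ ev ev : ℝ) = 0 := by rw [hnorm, hz]; ring
    rw [this]
    exact mul_nonneg (norm_nonneg _) (hposE ev)
  · have hpos' : (0:ℝ) < ‖ev‖ := lt_of_le_of_ne (norm_nonneg _) (Ne.symm hz)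
    have h4 : (0:ℝ) ≤ (inner ℝ ev (T ev) : ℝ) := hposE ev
    have hee : ‖ev‖ * ‖ev‖ = (inner ℝ ev ev : ℝ) := by rw [hnorm]; ring
    have hNpos : (0:ℝ) < (inner ℝ ev ev : ℝ) := by rw [hnorm]; positivity
    have hkey' : (inner ℝ ev ev : ℝ) ^ 2
        ≤ ‖S‖ * (inner ℝ ev ev : ℝ) * (inner ℝ ev (T ev) : ℝ) := by nlinarith [hkey, hee]
    nlinarith [hkey', hNpos, h4]

/-- for τ = Σ_{j,ℓ} Θ_{jℓ} φ_j ⊗ ψ_ℓ with φ orthonormal in L²(dx), ψ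
orthonormal in L²(dy) and Ψ the invertible f-weighted Gram matrix of the φ_j,
one has ‖τ‖² ≤ ‖Ψ⁻¹‖_op · ‖τ‖_f². -/
theorem L2_norm_le_opNorm_inv_mul_f_weighted_norm
    (m₁ m₂ : ℕ)
    (f : ℝ → ℝ) (hfmeas : Measurable f) (hf0 : ∀ x, 0 ≤ f x)
    (φ : Fin m₁ → ℝ → ℝ) (hφmeas : ∀ j, Measurable (φ j))
    (hφL2 : ∀ j, MemLp (φ j) 2 (volume : Measure ℝ))
    (hφorth : ∀ j j', ∫ x, φ j x * φ j' x = if j = j' then (1:ℝ) else 0)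
    (hφint : ∀ j, Integrable (fun x => φ j x ^ 2 * f x))
    (ψ : Fin m₂ → ℝ → ℝ) (hψmeas : ∀ ℓ, Measurable (ψ ℓ))
    (hψL2 : ∀ ℓ, MemLp (ψ ℓ) 2 (volume : Measure ℝ))
    (hψorth : ∀ ℓ ℓ', ∫ y, ψ ℓ y * ψ ℓ' y = if ℓ = ℓ' then (1:ℝ) else 0)
    (Ψ : Matrix (Fin m₁) (Fin m₁) ℝ)
    (hΨ : Ψ = Matrix.of fun j j' => ∫ x, φ j x * φ j' x * f x)
    (hinv : IsUnit Ψ)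
    (Θ : Matrix (Fin m₁) (Fin m₂) ℝ) :
    ∫ y, ∫ x, (∑ j, ∑ ℓ, Θ j ℓ * φ j x * ψ ℓ y) ^ 2 ≤
      ‖Matrix.toEuclideanCLM (𝕜 := ℝ) Ψ⁻¹‖ *
        ∫ y, ∫ x, (∑ j, ∑ ℓ, Θ j ℓ * φ j x * ψ ℓ y) ^ 2 * f x := by
  classical
  -- coefficients
  set c : Fin m₁ → ℝ → ℝ := fun j y => ∑ ℓ, Θ j ℓ * ψ ℓ y with hc
  -- integrability of products
  have hφφ : ∀ j j', Integrable (fun x => φ j x * φ j' x) (volume : Measure ℝ) :=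
    fun j j' => aux_integrable_mul (hφL2 j) (hφL2 j')
  have hψψ : ∀ ℓ ℓ', Integrable (fun y => ψ ℓ y * ψ ℓ' y) (volume : Measure ℝ) :=
    fun ℓ ℓ' => aux_integrable_mul (hψL2 ℓ) (hψL2 ℓ')
  have hφφf : ∀ j j', Integrable (fun x => φ j x * φ j' x * f x) (volume : Measure ℝ) := by
    intro j j'
    apply Integrable.mono' (((hφint j).add (hφint j')).const_mul (1/2))
      ((((hφmeas j).mul (hφmeas j')).mul hfmeas).aestronglyMeasurable)
    filter_upwards with x
    simp only [Pi.add_apply, Pi.mul_apply]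
    rw [Real.norm_eq_abs, abs_mul, abs_mul, abs_of_nonneg (hf0 x)]
    nlinarith [sq_nonneg (|φ j x| - |φ j' x|), sq_abs (φ j x), sq_abs (φ j' x), hf0 x,
      abs_nonneg (φ j x), abs_nonneg (φ j' x),
      mul_le_mul_of_nonneg_right (sq_nonneg (|φ j x| - |φ j' x|)) (hf0 x)]
  -- rewrite the integrand
  have hrw : ∀ y x, (∑ j, ∑ ℓ, Θ j ℓ * φ j x * ψ ℓ y) = ∑ j, c j y * φ j x := by
    intro y x
    refine Finset.sum_congr rfl fun j _ => ?_
    rw [hc, Finset.sum_mul]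
    exact Finset.sum_congr rfl fun ℓ _ => by ring
  -- inner unweighted integral
  have hinner1 : ∀ y, ∫ x, (∑ j, ∑ ℓ, Θ j ℓ * φ j x * ψ ℓ y) ^ 2
      = ∑ j, c j y * c j y := by
    intro y
    have hsq : ∀ x, (∑ j, ∑ ℓ, Θ j ℓ * φ j x * ψ ℓ y) ^ 2
        = (∑ j, c j y * φ j x) * (∑ j, c j y * φ j x) := by
      intro x; rw [hrw y x]; ring
    simp_rw [hsq]
    rw [aux_integral_expand' φ (fun j => c j y) (fun j => c j y) hφφ]
    simp_rw [hφorth]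
    simp [mul_ite, mul_one, mul_zero, Finset.sum_ite_eq]
  -- inner weighted integral
  have hinner2 : ∀ y, ∫ x, (∑ j, ∑ ℓ, Θ j ℓ * φ j x * ψ ℓ y) ^ 2 * f x
      = ∑ j, ∑ j', c j y * c j' y * Ψ j j' := by
    intro y
    have hsq : ∀ x, (∑ j, ∑ ℓ, Θ j ℓ * φ j x * ψ ℓ y) ^ 2 * f x
        = (∑ j, c j y * φ j x) * (∑ j, c j y * φ j x) * f x := by
      intro x; rw [hrw y x]; ring
    simp_rw [hsq]
    rw [aux_integral_expand φ f (fun j => c j y) (fun j => c j y) hφφf]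
    exact Finset.sum_congr rfl fun j _ => Finset.sum_congr rfl fun j' _ => by
      rw [hΨ]; rfl
  -- memℒp of c j
  have hcL2 : ∀ j, MemLp (c j) 2 (volume : Measure ℝ) := by
    intro j
    show MemLp (fun y => ∑ ℓ, Θ j ℓ * ψ ℓ y) 2 (volume : Measure ℝ)
    have h : (fun y => ∑ ℓ, Θ j ℓ * ψ ℓ y) = ∑ ℓ, fun y => Θ j ℓ * ψ ℓ y := by
      funext y; simp
    rw [h]
    exact memLp_finsetSum' _ (fun ℓ _ => (hψL2 ℓ).const_mul _)
  have hcc : ∀ j j', Integrable (fun y => c j y * c j' y) (volume : Measure ℝ) :=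
    fun j j' => aux_integrable_mul (hcL2 j) (hcL2 j')
  -- ∫ c j c j' = ∑ ℓ Θ j ℓ Θ j' ℓ
  have hccint : ∀ j j', ∫ y, c j y * c j' y = ∑ ℓ, Θ j ℓ * Θ j' ℓ := by
    intro j j'
    rw [hc]
    rw [aux_integral_expand' ψ (fun ℓ => Θ j ℓ) (fun ℓ => Θ j' ℓ) hψψ]
    simp_rw [hψorth]
    simp [mul_ite, mul_one, mul_zero, Finset.sum_ite_eq]
  -- LHS value
  have hLHS : ∫ y, ∫ x, (∑ j, ∑ ℓ, Θ j ℓ * φ j x * ψ ℓ y) ^ 2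
      = ∑ ℓ, ∑ j, Θ j ℓ ^ 2 := by
    simp_rw [hinner1]
    rw [integral_finset_sum _ (fun j _ => hcc j j)]
    simp_rw [hccint]
    rw [Finset.sum_comm]
    exact Finset.sum_congr rfl fun ℓ _ => Finset.sum_congr rfl fun j _ => by ring
  -- RHS value
  have hRHS : ∫ y, ∫ x, (∑ j, ∑ ℓ, Θ j ℓ * φ j x * ψ ℓ y) ^ 2 * f x
      = ∑ ℓ, ∑ j, ∑ j', Θ j ℓ * Ψ j j' * Θ j' ℓ := by
    simp_rw [hinner2]
    rw [integral_finset_sum _ (fun j _ => integrable_finset_sum _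
      (fun j' _ => (hcc j j').mul_const (Ψ j j')))]
    have h1 : ∀ j, ∫ y, ∑ j', c j y * c j' y * Ψ j j'
        = ∑ j', (∑ ℓ, Θ j ℓ * Θ j' ℓ) * Ψ j j' := by
      intro j
      rw [integral_finset_sum _ (fun j' _ => (hcc j j').mul_const _)]
      refine Finset.sum_congr rfl fun j' _ => ?_
      rw [integral_mul_const, hccint]
    simp_rw [h1, Finset.sum_mul]
    have h2 : ∀ j, ∑ j', ∑ ℓ, Θ j ℓ * Θ j' ℓ * Ψ j j'
        = ∑ ℓ, ∑ j', Θ j ℓ * Θ j' ℓ * Ψ j j' := fun j => Finset.sum_comm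
    simp_rw [h2]
    rw [Finset.sum_comm]
    exact Finset.sum_congr rfl fun ℓ _ => Finset.sum_congr rfl fun j _ =>
      Finset.sum_congr rfl fun j' _ => by ring
  -- symmetry and positivity of Ψ
  have hsym : ∀ j j', Ψ j j' = Ψ j' j := by
    intro j j'
    rw [hΨ]
    show (∫ x, φ j x * φ j' x * f x) = ∫ x, φ j' x * φ j x * f x
    exact congrArg _ (funext fun x => by ring)
  have hpos : ∀ v : Fin m₁ → ℝ, 0 ≤ ∑ j, ∑ j', v j * Ψ j j' * v j' := by
    intro v
    have h := aux_integral_expand φ f v v hφφf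
    have h0 : 0 ≤ ∫ x, (∑ j, v j * φ j x) * (∑ j, v j * φ j x) * f x :=
      integral_nonneg fun x => mul_nonneg (mul_self_nonneg _) (hf0 x)
    rw [h] at h0
    calc (0:ℝ) ≤ ∑ j, ∑ j', v j * v j' * ∫ x, φ j x * φ j' x * f x := h0
    _ = ∑ j, ∑ j', v j * Ψ j j' * v j' := by
        refine Finset.sum_congr rfl fun j _ => Finset.sum_congr rfl fun j' _ => ?_
        rw [hΨ]
        show v j * v j' * (∫ x, φ j x * φ j' x * f x)
          = v j * (∫ x, φ j x * φ j' x * f x) * v j'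
        ring
  -- conclude
  rw [hLHS, hRHS, Finset.mul_sum]
  exact Finset.sum_le_sum fun ℓ _ => aux_matrix_key Ψ hsym hpos hinv (fun j => Θ j ℓ)
end

section
/- Let f : ℝ → [0,∞) be measurable, let φ₁,…,φ_{m₁} be measurable with sup_{x} Σ_{j=1}^{m₁} φ_j(x)² ≤ L_φ and ∫ φ_j² f < ∞, and let ψ₁,…,ψ_{m₂} be an orthonormal family of L²(ℝ, dy) with sup_{y} Σ_{ℓ=1}^{m₂} ψ_ℓ(y)² ≤ L_ψ. Suppose the Gram matrix Ψ = (∫ φ_j φ_{j'} f dx)_{j,j'} is symmetric positive definite. Then for every Θ ∈ M_{m₁,m₂}(ℝ), the function τ(x,y) = Σ_{j,ℓ} Θ_{jℓ} φ_j(x) ψ_ℓ(y) satisfies sup_{x,y ∈ ℝ} τ(x,y)² ≤ L_φ L_ψ ‖Ψ⁻¹‖_op ∫∫ τ(x,y)² f(x) dx dy, where ‖·‖_op denotes the spectral norm. -/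
open MeasureTheory Real Matrix



lemma dot_mulVec_symm {m : ℕ} (A : Matrix (Fin m) (Fin m) ℝ) (hA : Aᵀ = A) (x y : Fin m → ℝ) :
    (A *ᵥ x) ⬝ᵥ y = x ⬝ᵥ (A *ᵥ y) := by
  rw [Matrix.dotProduct_mulVec, ← Matrix.mulVec_transpose, hA]

lemma inner_inv_le {m : ℕ} (B : Matrix (Fin m) (Fin m) ℝ) (v : Fin m → ℝ) :
    (B *ᵥ v) ⬝ᵥ v ≤ ‖Matrix.toEuclideanCLM (𝕜 := ℝ) B‖ * (v ⬝ᵥ v) := by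
  set T := Matrix.toEuclideanCLM (𝕜 := ℝ) B
  set x : EuclideanSpace ℝ (Fin m) := (WithLp.equiv 2 _).symm v
  have hTx : T x = (WithLp.equiv 2 _).symm (B *ᵥ v) := by
    simp [T, x, Matrix.toEuclideanCLM_toLp, Matrix.toLin'_apply]
  have h1 : (B *ᵥ v) ⬝ᵥ v = inner ℝ (T x) x := by
    rw [hTx]
    simp [PiLp.inner_apply, dotProduct, RCLike.inner_apply, x, mul_comm]
  have h2 : (v ⬝ᵥ v : ℝ) = ‖x‖ * ‖x‖ := by
    rw [← real_inner_self_eq_norm_mul_norm]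
    simp [PiLp.inner_apply, dotProduct, x]
    rw [EuclideanSpace.norm_sq_eq]; simp [sq]
  rw [h1, h2]
  calc (inner ℝ (T x) x : ℝ) ≤ ‖T x‖ * ‖x‖ := real_inner_le_norm _ _
    _ ≤ (‖T‖ * ‖x‖) * ‖x‖ := by
        exact mul_le_mul_of_nonneg_right (T.le_opNorm x) (norm_nonneg _)
    _ = ‖T‖ * (‖x‖ * ‖x‖) := by ring

lemma quad_bound {m : ℕ} (Ψ : Matrix (Fin m) (Fin m) ℝ) (hpos : Ψ.PosDef) (v : Fin m → ℝ) :
    ∑ j, v j ^ 2 ≤ ‖Matrix.toEuclideanCLM (𝕜 := ℝ) Ψ⁻¹‖ * (v ⬝ᵥ Ψ *ᵥ v) := by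
  have hΨsym : Ψᵀ = Ψ := by simpa [Matrix.IsHermitian] using hpos.isHermitian
  have hdet : IsUnit Ψ.det := isUnit_iff_ne_zero.2 hpos.det_pos.ne'
  have hinv : Ψ * Ψ⁻¹ = 1 := Matrix.mul_nonsing_inv _ hdet
  obtain ⟨S, hSsym, hSS⟩ : ∃ S : Matrix (Fin m) (Fin m) ℝ, Sᵀ = S ∧ S * S = Ψ := by
    open scoped MatrixOrder in
    exact ⟨CFC.sqrt Ψ, by simpa [Matrix.IsHermitian] using (CFC.sqrt_nonneg Ψ).posSemidef.isHermitian,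
      CFC.sqrt_mul_sqrt_self Ψ hpos.posSemidef.nonneg⟩
  set u := Ψ⁻¹ *ᵥ v with hu
  set N := ‖Matrix.toEuclideanCLM (𝕜 := ℝ) Ψ⁻¹‖ with hN
  have hΨu : Ψ *ᵥ u = v := by
    rw [hu, Matrix.mulVec_mulVec, hinv, Matrix.one_mulVec]
  have e1 : v ⬝ᵥ v = (S *ᵥ u) ⬝ᵥ (S *ᵥ v) := by
    rw [dot_mulVec_symm S hSsym, Matrix.mulVec_mulVec, hSS, ← dot_mulVec_symm Ψ hΨsym, hΨu]
  have e3 : (S *ᵥ u) ⬝ᵥ (S *ᵥ u) = u ⬝ᵥ v := by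
    rw [dot_mulVec_symm S hSsym, Matrix.mulVec_mulVec, hSS, hΨu]
  have e4 : (S *ᵥ v) ⬝ᵥ (S *ᵥ v) = v ⬝ᵥ Ψ *ᵥ v := by
    rw [dot_mulVec_symm S hSsym, Matrix.mulVec_mulVec, hSS]
  have e5 : u ⬝ᵥ v ≤ N * (v ⬝ᵥ v) := inner_inv_le Ψ⁻¹ v
  have hq : 0 ≤ v ⬝ᵥ Ψ *ᵥ v := by
    have := hpos.posSemidef.dotProduct_mulVec_nonneg v
    simpa using this
  have cs : ((S *ᵥ u) ⬝ᵥ (S *ᵥ v)) ^ 2 ≤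
      ((S *ᵥ u) ⬝ᵥ (S *ᵥ u)) * ((S *ᵥ v) ⬝ᵥ (S *ᵥ v)) := by
    have := Finset.sum_mul_sq_le_sq_mul_sq Finset.univ (S *ᵥ u) (S *ᵥ v)
    simpa [dotProduct, sq, Finset.mul_sum] using this
  have key : (v ⬝ᵥ v) ^ 2 ≤ (N * (v ⬝ᵥ v)) * (v ⬝ᵥ Ψ *ᵥ v) := by
    calc (v ⬝ᵥ v) ^ 2 = ((S *ᵥ u) ⬝ᵥ (S *ᵥ v)) ^ 2 := by rw [e1]
      _ ≤ ((S *ᵥ u) ⬝ᵥ (S *ᵥ u)) * ((S *ᵥ v) ⬝ᵥ (S *ᵥ v)) := cs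
      _ = (u ⬝ᵥ v) * (v ⬝ᵥ Ψ *ᵥ v) := by rw [e3, e4]
      _ ≤ (N * (v ⬝ᵥ v)) * (v ⬝ᵥ Ψ *ᵥ v) := mul_le_mul_of_nonneg_right e5 hq
  have hvv : ∑ j, v j ^ 2 = v ⬝ᵥ v := by simp [dotProduct, sq]
  rw [hvv]
  have hvv0 : 0 ≤ v ⬝ᵥ v := by
    rw [← hvv]; positivity
  rcases eq_or_lt_of_le hvv0 with h0 | h0
  · rw [← h0]
    have hN0 : 0 ≤ N := norm_nonneg _
    positivity
  · have := key
    rw [sq] at this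
    have h' : (v ⬝ᵥ v) * (v ⬝ᵥ v) ≤ (v ⬝ᵥ v) * (N * (v ⬝ᵥ Ψ *ᵥ v)) := by
      calc (v ⬝ᵥ v) * (v ⬝ᵥ v) ≤ (N * (v ⬝ᵥ v)) * (v ⬝ᵥ Ψ *ᵥ v) := this
        _ = (v ⬝ᵥ v) * (N * (v ⬝ᵥ Ψ *ᵥ v)) := by ring
    exact le_of_mul_le_mul_left h' h0


lemma int_mul_mul_f (g h f : ℝ → ℝ) (hg : Measurable g) (hh : Measurable h)
    (hf : Measurable f) (hf0 : ∀ x, 0 ≤ f x)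
    (hgi : Integrable (fun x => g x ^ 2 * f x)) (hhi : Integrable (fun x => h x ^ 2 * f x)) :
    Integrable (fun x => g x * h x * f x) := by
  refine (hgi.add hhi).mono' ((hg.mul hh).mul hf).aestronglyMeasurable ?_
  filter_upwards with x
  have h1 : |g x * h x| ≤ g x ^ 2 + h x ^ 2 :=
    abs_le.2 ⟨by nlinarith [sq_nonneg (g x + h x)], by nlinarith [sq_nonneg (g x - h x)]⟩
  calc ‖g x * h x * f x‖ = |g x * h x| * f x := by
        rw [Real.norm_eq_abs, abs_mul, abs_of_nonneg (hf0 x)]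
    _ ≤ (g x ^ 2 + h x ^ 2) * f x := mul_le_mul_of_nonneg_right h1 (hf0 x)
    _ = g x ^ 2 * f x + h x ^ 2 * f x := by ring

lemma int_mul_L2 (g h : ℝ → ℝ) (hg : Measurable g) (hh : Measurable h)
    (hg2 : MemLp g 2 (volume : Measure ℝ)) (hh2 : MemLp h 2 (volume : Measure ℝ)) :
    Integrable (fun y => g y * h y) := by
  refine (hg2.integrable_sq.add hh2.integrable_sq).mono' (hg.mul hh).aestronglyMeasurable ?_
  filter_upwards with x
  have h1 : |g x * h x| ≤ g x ^ 2 + h x ^ 2 :=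
    abs_le.2 ⟨by nlinarith [sq_nonneg (g x + h x)], by nlinarith [sq_nonneg (g x - h x)]⟩
  calc ‖g x * h x‖ = |g x * h x| := Real.norm_eq_abs _
    _ ≤ g x ^ 2 + h x ^ 2 := h1


/-- sup-norm control sup_{x,y} τ(x,y)² ≤ L_φ L_ψ ‖Ψ⁻¹‖_op ‖τ‖_f² for
τ = Σ_{j,ℓ} Θ_{jℓ} φ_j ⊗ ψ_ℓ, with Ψ the symmetric positive definite f-weighted Gram
matrix of the φ_j. -/
theorem sup_norm_sq_le_f_weighted_norm_sq
    (m₁ m₂ : ℕ) (Lφ Lψ : ℝ)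
    (f : ℝ → ℝ) (hfmeas : Measurable f) (hf0 : ∀ x, 0 ≤ f x)
    (φ : Fin m₁ → ℝ → ℝ) (hφmeas : ∀ j, Measurable (φ j))
    (hφL : ∀ x, ∑ j, φ j x ^ 2 ≤ Lφ)
    (hφint : ∀ j, Integrable (fun x => φ j x ^ 2 * f x))
    (ψ : Fin m₂ → ℝ → ℝ) (hψmeas : ∀ ℓ, Measurable (ψ ℓ))
    (hψL2 : ∀ ℓ, MemLp (ψ ℓ) 2 (volume : Measure ℝ))
    (hψorth : ∀ ℓ ℓ', ∫ y, ψ ℓ y * ψ ℓ' y = if ℓ = ℓ' then (1:ℝ) else 0)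
    (hψL : ∀ y, ∑ ℓ, ψ ℓ y ^ 2 ≤ Lψ)
    (Ψ : Matrix (Fin m₁) (Fin m₁) ℝ)
    (hΨ : Ψ = Matrix.of fun j j' => ∫ x, φ j x * φ j' x * f x)
    (hpos : Ψ.PosDef)
    (Θ : Matrix (Fin m₁) (Fin m₂) ℝ) :
    ∀ x y : ℝ, (∑ j, ∑ ℓ, Θ j ℓ * φ j x * ψ ℓ y) ^ 2 ≤
      Lφ * Lψ * ‖Matrix.toEuclideanCLM (𝕜 := ℝ) Ψ⁻¹‖ *
        ∫ y', ∫ x', (∑ j, ∑ ℓ, Θ j ℓ * φ j x' * ψ ℓ y') ^ 2 * f x' := by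
  intro x y
  set N := ‖Matrix.toEuclideanCLM (𝕜 := ℝ) Ψ⁻¹‖ with hN
  have hN0 : 0 ≤ N := norm_nonneg _
  have hLφ0 : 0 ≤ Lφ := le_trans (Finset.sum_nonneg fun j _ => sq_nonneg _) (hφL 0)
  have hLψ0 : 0 ≤ Lψ := le_trans (Finset.sum_nonneg fun ℓ _ => sq_nonneg _) (hψL 0)
  set A : Fin m₁ → ℝ → ℝ := fun j y => ∑ ℓ, Θ j ℓ * ψ ℓ y with hA
  have hτ : ∀ x y : ℝ, ∑ j, ∑ ℓ, Θ j ℓ * φ j x * ψ ℓ y = ∑ j, A j y * φ j x := by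
    intro x y
    refine Finset.sum_congr rfl fun j _ => ?_
    simp only [hA, Finset.sum_mul]
    exact Finset.sum_congr rfl fun ℓ _ => by ring
  -- integrability
  have hφφf : ∀ j j' : Fin m₁, Integrable (fun x => φ j x * φ j' x * f x) :=
    fun j j' => int_mul_mul_f _ _ _ (hφmeas j) (hφmeas j') hfmeas hf0 (hφint j) (hφint j')
  have hψψ : ∀ ℓ ℓ' : Fin m₂, Integrable (fun y => ψ ℓ y * ψ ℓ' y) :=
    fun ℓ ℓ' => int_mul_L2 _ _ (hψmeas ℓ) (hψmeas ℓ') (hψL2 ℓ) (hψL2 ℓ')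
  -- inner integral
  have hinner : ∀ y : ℝ, (∫ x', (∑ j, ∑ ℓ, Θ j ℓ * φ j x' * ψ ℓ y) ^ 2 * f x')
      = ∑ j, ∑ j', (A j y * A j' y) * Ψ j j' := by
    intro y
    have h1 : ∀ x' : ℝ, (∑ j, ∑ ℓ, Θ j ℓ * φ j x' * ψ ℓ y) ^ 2 * f x'
        = ∑ j, ∑ j', (A j y * A j' y) * (φ j x' * φ j' x' * f x') := by
      intro x'
      rw [hτ, sq, Finset.sum_mul_sum, Finset.sum_mul]
      refine Finset.sum_congr rfl fun j _ => ?_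
      rw [Finset.sum_mul]
      exact Finset.sum_congr rfl fun j' _ => by ring
    simp_rw [h1]
    rw [integral_finset_sum _ (fun j _ =>
      integrable_finset_sum _ (fun j' _ => (hφφf j j').const_mul _))]
    refine Finset.sum_congr rfl fun j _ => ?_
    rw [integral_finset_sum _ (fun j' _ => (hφφf j j').const_mul _)]
    refine Finset.sum_congr rfl fun j' _ => ?_
    rw [integral_const_mul _ _, hΨ]
    rfl
  -- A products integrable and their integrals
  have hAAexp : ∀ j j' : Fin m₁, (fun y => A j y * A j' y)
      = fun y => ∑ ℓ, ∑ ℓ', (Θ j ℓ * Θ j' ℓ') * (ψ ℓ y * ψ ℓ' y) := by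
    intro j j'
    funext y
    simp only [hA]
    rw [Finset.sum_mul_sum]
    refine Finset.sum_congr rfl fun ℓ _ => Finset.sum_congr rfl fun ℓ' _ => by ring
  have hAA : ∀ j j' : Fin m₁, Integrable (fun y => A j y * A j' y) := by
    intro j j'
    rw [hAAexp]
    exact integrable_finset_sum _ fun ℓ _ =>
      integrable_finset_sum _ fun ℓ' _ => (hψψ ℓ ℓ').const_mul _
  have hAAint : ∀ j j' : Fin m₁, (∫ y', A j y' * A j' y') = ∑ ℓ, Θ j ℓ * Θ j' ℓ := by
    intro j j'
    rw [hAAexp]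
    rw [integral_finset_sum _ (fun ℓ _ =>
      integrable_finset_sum _ (fun ℓ' _ => (hψψ ℓ ℓ').const_mul _))]
    have h3 : ∀ ℓ : Fin m₂, (∫ y', ∑ ℓ', Θ j ℓ * Θ j' ℓ' * (ψ ℓ y' * ψ ℓ' y'))
        = Θ j ℓ * Θ j' ℓ := by
      intro ℓ
      rw [integral_finset_sum _ (fun ℓ' _ => (hψψ ℓ ℓ').const_mul _)]
      have h2 : ∀ ℓ' : Fin m₂, (∫ y', Θ j ℓ * Θ j' ℓ' * (ψ ℓ y' * ψ ℓ' y'))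
          = Θ j ℓ * Θ j' ℓ' * (if ℓ = ℓ' then (1:ℝ) else 0) := by
        intro ℓ'
        rw [integral_const_mul _ _, hψorth]
      simp_rw [h2]
      simp
    simp_rw [h3]
  -- full double integral
  have hInt : (∫ y', ∫ x', (∑ j, ∑ ℓ, Θ j ℓ * φ j x' * ψ ℓ y') ^ 2 * f x')
      = ∑ ℓ, ((fun j => Θ j ℓ) ⬝ᵥ Ψ *ᵥ (fun j => Θ j ℓ)) := by
    simp_rw [hinner]
    rw [integral_finset_sum _ (fun j _ =>
      integrable_finset_sum _ (fun j' _ => (hAA j j').mul_const (Ψ j j')))]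
    have : ∀ j : Fin m₁, (∫ y', ∑ j', (A j y' * A j' y') * Ψ j j')
        = ∑ j', (∑ ℓ, Θ j ℓ * Θ j' ℓ) * Ψ j j' := by
      intro j
      rw [integral_finset_sum _ (fun j' _ => (hAA j j').mul_const _)]
      exact Finset.sum_congr rfl fun j' _ => by rw [integral_mul_const _ _, hAAint]
    simp_rw [this]
    -- combinatorial rearrangement
    have l1 : ∀ j j' : Fin m₁, (∑ ℓ, Θ j ℓ * Θ j' ℓ) * Ψ j j'
        = ∑ ℓ, Θ j ℓ * Θ j' ℓ * Ψ j j' := fun j j' => Finset.sum_mul _ _ _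
    simp_rw [l1]
    have l2 : ∀ ℓ : Fin m₂, ((fun j => Θ j ℓ) ⬝ᵥ Ψ *ᵥ (fun j => Θ j ℓ))
        = ∑ j, ∑ j', Θ j ℓ * Θ j' ℓ * Ψ j j' := by
      intro ℓ
      simp only [dotProduct, Matrix.mulVec, Finset.mul_sum]
      exact Finset.sum_congr rfl fun j _ => Finset.sum_congr rfl fun j' _ => by ring
    simp_rw [l2]
    rw [show (∑ j, ∑ j', ∑ ℓ, Θ j ℓ * Θ j' ℓ * Ψ j j')
        = ∑ j, ∑ ℓ, ∑ j', Θ j ℓ * Θ j' ℓ * Ψ j j' from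
      Finset.sum_congr rfl fun j _ => Finset.sum_comm, Finset.sum_comm]
  -- pointwise bound
  have hpt : (∑ j, ∑ ℓ, Θ j ℓ * φ j x * ψ ℓ y) ^ 2 ≤ Lφ * Lψ * ∑ j, ∑ ℓ, (Θ j ℓ) ^ 2 := by
    rw [hτ]
    have cs1 : (∑ j, A j y * φ j x) ^ 2 ≤ (∑ j, (A j y) ^ 2) * ∑ j, (φ j x) ^ 2 :=
      Finset.sum_mul_sq_le_sq_mul_sq Finset.univ _ _
    have cs2 : ∀ j, (A j y) ^ 2 ≤ (∑ ℓ, (Θ j ℓ) ^ 2) * Lψ := by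
      intro j
      refine le_trans (Finset.sum_mul_sq_le_sq_mul_sq Finset.univ (fun ℓ => Θ j ℓ) (fun ℓ => ψ ℓ y)) ?_
      exact mul_le_mul_of_nonneg_left (hψL y) (Finset.sum_nonneg fun ℓ _ => sq_nonneg _)
    calc (∑ j, A j y * φ j x) ^ 2 ≤ (∑ j, (A j y) ^ 2) * ∑ j, (φ j x) ^ 2 := cs1
      _ ≤ (∑ j, (A j y) ^ 2) * Lφ :=
          mul_le_mul_of_nonneg_left (hφL x) (Finset.sum_nonneg fun j _ => sq_nonneg _)
      _ ≤ (∑ j, (∑ ℓ, (Θ j ℓ) ^ 2) * Lψ) * Lφ :=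
          mul_le_mul_of_nonneg_right (Finset.sum_le_sum fun j _ => cs2 j) hLφ0
      _ = Lφ * Lψ * ∑ j, ∑ ℓ, (Θ j ℓ) ^ 2 := by rw [← Finset.sum_mul]; ring
  -- column bound
  have hS : (∑ j, ∑ ℓ, (Θ j ℓ) ^ 2)
      ≤ N * ∑ ℓ, ((fun j => Θ j ℓ) ⬝ᵥ Ψ *ᵥ (fun j => Θ j ℓ)) := by
    rw [Finset.sum_comm, Finset.mul_sum]
    exact Finset.sum_le_sum fun ℓ _ => quad_bound Ψ hpos _
  rw [hInt]
  calc (∑ j, ∑ ℓ, Θ j ℓ * φ j x * ψ ℓ y) ^ 2 ≤ Lφ * Lψ * ∑ j, ∑ ℓ, (Θ j ℓ) ^ 2 := hpt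
    _ ≤ Lφ * Lψ * (N * ∑ ℓ, ((fun j => Θ j ℓ) ⬝ᵥ Ψ *ᵥ (fun j => Θ j ℓ))) :=
        mul_le_mul_of_nonneg_left hS (mul_nonneg hLφ0 hLψ0)
    _ = Lφ * Lψ * N * ∑ ℓ, ((fun j => Θ j ℓ) ⬝ᵥ Ψ *ᵥ (fun j => Θ j ℓ)) := by ring
end

section
/- Let μ be a probability measure on ℝ, let ρ be a probability measure on ℝ² whose first marginal is μ, and let k : ℝ × ℝ → [0,∞) be measurable with ∫_ℝ k(x,y) dy = 1 for μ-almost every x. Let φ₁,…,φ_{m₁} ∈ L²(μ), and let ψ₁,…,ψ_{m₂} be bounded measurable functions forming an orthonormal family of L²(ℝ, dy) with sup_{y∈ℝ} Σ_{ℓ=1}^{m₂} ψ_ℓ(y)² ≤ L_ψ. Then for every Θ ∈ M_{m₁,m₂}(ℝ), the function τ(x,y) = Σ_{j,ℓ} Θ_{jℓ} φ_j(x) ψ_ℓ(y) satisfies |∫_{ℝ²} τ dρ − ∫_ℝ (∫_ℝ τ(x,y) k(x,y) dy) μ(dx)| ≤ 2 √(m₁ L_ψ) · (∫_ℝ ∫_ℝ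 τ(x,y)² dy μ(dx))^{1/2}. -/
open MeasureTheory Real

/-- Cauchy–Schwarz on a probability space: `∫ f ≤ √(∫ f²)` once `(∫f)² ≤ ∫ f²`. -/
lemma sq_integral_le_integral_sq' {α : Type*} {m : MeasurableSpace α} {μ : Measure α}
    [IsProbabilityMeasure μ] {f : α → ℝ} (hf : Integrable f μ)
    (hf2 : Integrable (fun x => f x ^ 2) μ) :
    (∫ x, f x ∂μ) ^ 2 ≤ ∫ x, f x ^ 2 ∂μ := by
  set a := ∫ x, f x ∂μ with ha
  have h : 0 ≤ ∫ x, (f x - a) ^ 2 ∂μ := integral_nonneg fun x => sq_nonneg _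
  have hexp : ∫ x, (f x - a) ^ 2 ∂μ = (∫ x, f x ^ 2 ∂μ) - a ^ 2 := by
    have heq : ∀ x, (f x - a) ^ 2 = f x ^ 2 - 2 * a * f x + a ^ 2 := fun x => by ring
    simp_rw [heq]
    have h1 : Integrable (fun x => f x ^ 2 - 2 * a * f x) μ := hf2.sub (hf.const_mul (2 * a))
    rw [integral_add h1 (integrable_const _),
      integral_sub hf2 (hf.const_mul (2 * a)), integral_const_mul, integral_const]
    simp only [measure_univ, probReal_univ, ENNReal.toReal_one, one_smul, ← ha]
    ring
  linarith [hexp ▸ h]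

/-- deterministic core of the rough empirical process bound: for
τ = Σ_{j,ℓ} Θ_{jℓ} φ_j ⊗ ψ_ℓ, with ρ a probability measure on ℝ² of first marginal μ
and k(x,·) probability densities,
|∫τ dρ − ∫∫ τ(x,y)k(x,y) dy dμ(x)| ≤ 2√(m₁ L_ψ) (∫∫ τ(x,y)² dy dμ(x))^{1/2}. -/
theorem empirical_process_rough_bound
    (m₁ m₂ : ℕ) (Lψ : ℝ)
    (μ : Measure ℝ) [IsProbabilityMeasure μ]
    (ρ : Measure (ℝ × ℝ)) [IsProbabilityMeasure ρ]
    (hmarg : ρ.map Prod.fst = μ)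
    (k : ℝ → ℝ → ℝ) (hkmeas : Measurable (Function.uncurry k))
    (hk0 : ∀ x y, 0 ≤ k x y)
    (hk1 : ∀ᵐ x ∂μ, ∫ y, k x y = 1)
    (φ : Fin m₁ → ℝ → ℝ) (hφ : ∀ j, MemLp (φ j) 2 μ)
    (ψ : Fin m₂ → ℝ → ℝ) (hψmeas : ∀ ℓ, Measurable (ψ ℓ))
    (hψorth : ∀ ℓ ℓ', ∫ y, ψ ℓ y * ψ ℓ' y = if ℓ = ℓ' then (1:ℝ) else 0)
    (hψL : ∀ y, ∑ ℓ, ψ ℓ y ^ 2 ≤ Lψ)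
    (Θ : Matrix (Fin m₁) (Fin m₂) ℝ) :
    |(∫ q, (∑ j, ∑ ℓ, Θ j ℓ * φ j q.1 * ψ ℓ q.2) ∂ρ) -
        ∫ x, (∫ y, (∑ j, ∑ ℓ, Θ j ℓ * φ j x * ψ ℓ y) * k x y) ∂μ| ≤
      2 * Real.sqrt ((m₁ : ℝ) * Lψ) *
        Real.sqrt (∫ x, (∫ y, (∑ j, ∑ ℓ, Θ j ℓ * φ j x * ψ ℓ y) ^ 2) ∂μ) := by
  have hLψ : 0 ≤ Lψ :=
    le_trans (Finset.sum_nonneg fun ℓ _ => sq_nonneg _) (hψL 0)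
  rcases Nat.eq_zero_or_pos m₁ with hm | hm
  · subst hm
    simp
  -- coefficients and "column norm" function
  set c : Fin m₂ → ℝ → ℝ := fun ℓ x => ∑ j, Θ j ℓ * φ j x with hc
  set S : ℝ → ℝ := fun x => ∑ ℓ, (c ℓ x) ^ 2 with hS
  have hSnn : ∀ x, 0 ≤ S x := fun x => Finset.sum_nonneg fun ℓ _ => sq_nonneg _
  have hτ : ∀ x y, (∑ j, ∑ ℓ, Θ j ℓ * φ j x * ψ ℓ y) = ∑ ℓ, c ℓ x * ψ ℓ y := by
    intro x y
    rw [Finset.sum_comm]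
    exact Finset.sum_congr rfl fun ℓ _ => (Finset.sum_mul _ _ _).symm
  simp only [hτ]
  -- ψ integrability facts
  have hψ2int : ∀ ℓ, Integrable (fun y => ψ ℓ y * ψ ℓ y) := by
    intro ℓ
    by_contra h
    have := hψorth ℓ ℓ
    rw [integral_undef h] at this
    simp at this
  have hψmul_int : ∀ ℓ ℓ', Integrable (fun y => ψ ℓ y * ψ ℓ' y) := by
    intro ℓ ℓ'
    refine Integrable.mono' (((hψ2int ℓ).add (hψ2int ℓ')).const_mul (1/2))
      (((hψmeas ℓ).mul (hψmeas ℓ')).aestronglyMeasurable) ?_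
    filter_upwards with y
    rw [Real.norm_eq_abs, abs_mul]
    simp only [Pi.add_apply]
    nlinarith [sq_nonneg (|ψ ℓ y| - |ψ ℓ' y|), sq_abs (ψ ℓ y), sq_abs (ψ ℓ' y),
      abs_nonneg (ψ ℓ y), abs_nonneg (ψ ℓ' y)]
  -- (A) the inner dy-integral of τ² equals S x
  have hA : ∀ x, (∫ y, (∑ ℓ, c ℓ x * ψ ℓ y) ^ 2) = S x := by
    intro x
    have heq : ∀ y, (∑ ℓ, c ℓ x * ψ ℓ y) ^ 2
        = ∑ ℓ, ∑ ℓ', (c ℓ x * c ℓ' x) * (ψ ℓ y * ψ ℓ' y) := by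
      intro y
      rw [sq, Finset.sum_mul_sum]
      exact Finset.sum_congr rfl fun ℓ _ => Finset.sum_congr rfl fun ℓ' _ => by ring
    simp_rw [heq]
    rw [integral_finset_sum _ fun ℓ _ =>
      integrable_finset_sum _ fun ℓ' _ => (hψmul_int ℓ ℓ').const_mul _]
    have : ∀ ℓ : Fin m₂, (∫ y, ∑ ℓ', (c ℓ x * c ℓ' x) * (ψ ℓ y * ψ ℓ' y))
        = ∑ ℓ', (c ℓ x * c ℓ' x) * (if ℓ = ℓ' then (1:ℝ) else 0) := by
      intro ℓ
      rw [integral_finset_sum _ fun ℓ' _ => (hψmul_int ℓ ℓ').const_mul _]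
      exact Finset.sum_congr rfl fun ℓ' _ => by
        rw [integral_const_mul, hψorth ℓ ℓ']
    simp_rw [this]
    simp [hS, mul_ite, Finset.sum_ite_eq, sq]
  -- (B) pointwise bound |τ(x,y)| ≤ √Lψ √(S x)
  have hB : ∀ x y, |∑ ℓ, c ℓ x * ψ ℓ y| ≤ Real.sqrt Lψ * Real.sqrt (S x) := by
    intro x y
    have h1 : (∑ ℓ, c ℓ x * ψ ℓ y) ^ 2 ≤ S x * Lψ := by
      refine le_trans (Finset.sum_mul_sq_le_sq_mul_sq _ (fun ℓ => c ℓ x) (fun ℓ => ψ ℓ y)) ?_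
      exact mul_le_mul_of_nonneg_left (hψL y) (hSnn x)
    calc |∑ ℓ, c ℓ x * ψ ℓ y| ≤ Real.sqrt (S x * Lψ) := Real.abs_le_sqrt h1
      _ = Real.sqrt Lψ * Real.sqrt (S x) := by
          rw [Real.sqrt_mul (hSnn x), mul_comm]
  -- integrability over μ
  have hcmem : ∀ ℓ, MemLp (c ℓ) 2 μ := by
    intro ℓ
    exact memLp_finset_sum _ fun j _ => (hφ j).const_mul (Θ j ℓ)
  have hSint : Integrable S μ := integrable_finset_sum _ fun ℓ _ => (hcmem ℓ).integrable_sq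
  have hsqrtS_meas : AEStronglyMeasurable (fun x => Real.sqrt (S x)) μ :=
    Real.continuous_sqrt.comp_aestronglyMeasurable hSint.aestronglyMeasurable
  have hsqrtS_mem : MemLp (fun x => Real.sqrt (S x)) 2 μ := by
    rw [memLp_two_iff_integrable_sq hsqrtS_meas]
    refine hSint.congr ?_
    filter_upwards with x
    rw [sq_sqrt (hSnn x)]
  have hsqrtS_int : Integrable (fun x => Real.sqrt (S x)) μ :=
    hsqrtS_mem.integrable one_le_two
  set I := ∫ x, Real.sqrt (S x) ∂μ with hI
  -- ρ-side bound
  have hfst : AEMeasurable (Prod.fst : ℝ × ℝ → ℝ) ρ := measurable_fst.aemeasurable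
  have hmap : ∫ q : ℝ × ℝ, Real.sqrt (S q.1) ∂ρ = I := by
    rw [hI, ← hmarg, integral_map hfst (hmarg ▸ hsqrtS_meas)]
  have hcomp_int : Integrable (fun q : ℝ × ℝ => Real.sqrt (S q.1)) ρ := by
    have h := (integrable_map_measure (g := fun x => Real.sqrt (S x))
      (hmarg ▸ hsqrtS_meas) hfst).mp (hmarg ▸ hsqrtS_int)
    exact h
  have hρ_bound : |∫ q, (∑ ℓ, c ℓ q.1 * ψ ℓ q.2) ∂ρ| ≤ Real.sqrt Lψ * I := by
    calc |∫ q, (∑ ℓ, c ℓ q.1 * ψ ℓ q.2) ∂ρ|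
        ≤ ∫ q, |∑ ℓ, c ℓ q.1 * ψ ℓ q.2| ∂ρ := by
          simpa using norm_integral_le_integral_norm (fun q : ℝ × ℝ => ∑ ℓ, c ℓ q.1 * ψ ℓ q.2)
      _ ≤ ∫ q : ℝ × ℝ, Real.sqrt Lψ * Real.sqrt (S q.1) ∂ρ := by
          refine integral_mono_of_nonneg (Filter.Eventually.of_forall fun q => abs_nonneg _)
            (hcomp_int.const_mul _) (Filter.Eventually.of_forall fun q => hB q.1 q.2)
      _ = Real.sqrt Lψ * I := by rw [integral_const_mul, hmap]
  -- k-side bound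
  have hkx : ∀ᵐ x ∂μ, Integrable (k x) volume ∧ ∫ y, k x y = 1 := by
    filter_upwards [hk1] with x hx
    refine ⟨?_, hx⟩
    by_contra h
    rw [integral_undef h] at hx
    norm_num at hx
  have hFbound : ∀ᵐ x ∂μ, |∫ y, (∑ ℓ, c ℓ x * ψ ℓ y) * k x y|
      ≤ Real.sqrt Lψ * Real.sqrt (S x) := by
    filter_upwards [hkx] with x hx
    obtain ⟨hint, hone⟩ := hx
    calc |∫ y, (∑ ℓ, c ℓ x * ψ ℓ y) * k x y|
        ≤ ∫ y, |∑ ℓ, c ℓ x * ψ ℓ y| * |k x y| := by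
          simpa using norm_integral_le_integral_norm (fun y => (∑ ℓ, c ℓ x * ψ ℓ y) * k x y)
      _ ≤ ∫ y, (Real.sqrt Lψ * Real.sqrt (S x)) * k x y := by
          refine integral_mono_of_nonneg
            (Filter.Eventually.of_forall fun y => mul_nonneg (abs_nonneg _) (abs_nonneg _))
            (hint.const_mul _) (Filter.Eventually.of_forall fun y => ?_)
          dsimp only
          rw [abs_of_nonneg (hk0 x y)]
          exact mul_le_mul_of_nonneg_right (hB x y) (hk0 x y)
      _ = Real.sqrt Lψ * Real.sqrt (S x) := by rw [integral_const_mul, hone, mul_one]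
  have hμ_bound : |∫ x, (∫ y, (∑ ℓ, c ℓ x * ψ ℓ y) * k x y) ∂μ| ≤ Real.sqrt Lψ * I := by
    calc |∫ x, (∫ y, (∑ ℓ, c ℓ x * ψ ℓ y) * k x y) ∂μ|
        ≤ ∫ x, |∫ y, (∑ ℓ, c ℓ x * ψ ℓ y) * k x y| ∂μ := by
          simpa using norm_integral_le_integral_norm
            (fun x => ∫ y, (∑ ℓ, c ℓ x * ψ ℓ y) * k x y)
      _ ≤ ∫ x, Real.sqrt Lψ * Real.sqrt (S x) ∂μ := by
          refine integral_mono_of_nonneg (Filter.Eventually.of_forall fun x => abs_nonneg _)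
            (hsqrtS_int.const_mul _) hFbound
      _ = Real.sqrt Lψ * I := by rw [integral_const_mul]
  -- Cauchy–Schwarz on μ : I ≤ √(∫ S dμ)
  have hInn : 0 ≤ I := integral_nonneg fun x => Real.sqrt_nonneg _
  have hCS : I ≤ Real.sqrt (∫ x, S x ∂μ) := by
    have h2 : (∫ x, Real.sqrt (S x) ∂μ) ^ 2 ≤ ∫ x, Real.sqrt (S x) ^ 2 ∂μ :=
      sq_integral_le_integral_sq' hsqrtS_int (by
        refine hSint.congr ?_
        filter_upwards with x
        rw [sq_sqrt (hSnn x)])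
    have h3 : (∫ x, Real.sqrt (S x) ^ 2 ∂μ) = ∫ x, S x ∂μ := by
      refine integral_congr_ae ?_
      filter_upwards with x
      rw [sq_sqrt (hSnn x)]
    rw [h3] at h2
    exact Real.le_sqrt_of_sq_le h2
  -- rewrite the RHS inner integral
  have hRHS : (∫ x, (∫ y, (∑ ℓ, c ℓ x * ψ ℓ y) ^ 2) ∂μ) = ∫ x, S x ∂μ :=
    integral_congr_ae (Filter.Eventually.of_forall fun x => hA x)
  rw [hRHS]
  -- final chain
  have hsqrt_le : Real.sqrt Lψ ≤ Real.sqrt ((m₁ : ℝ) * Lψ) := by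
    apply Real.sqrt_le_sqrt
    have : (1 : ℝ) ≤ (m₁ : ℝ) := by exact_mod_cast hm
    nlinarith
  calc |(∫ q, (∑ ℓ, c ℓ q.1 * ψ ℓ q.2) ∂ρ) -
        ∫ x, (∫ y, (∑ ℓ, c ℓ x * ψ ℓ y) * k x y) ∂μ|
      ≤ |∫ q, (∑ ℓ, c ℓ q.1 * ψ ℓ q.2) ∂ρ| +
        |∫ x, (∫ y, (∑ ℓ, c ℓ x * ψ ℓ y) * k x y) ∂μ| := abs_sub _ _
    _ ≤ Real.sqrt Lψ * I + Real.sqrt Lψ * I := add_le_add hρ_bound hμ_bound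
    _ = 2 * Real.sqrt Lψ * I := by ring
    _ ≤ 2 * Real.sqrt ((m₁ : ℝ) * Lψ) * Real.sqrt (∫ x, S x ∂μ) := by
        have h1 : 2 * Real.sqrt Lψ * I ≤ 2 * Real.sqrt Lψ * Real.sqrt (∫ x, S x ∂μ) :=
          mul_le_mul_of_nonneg_left hCS (by positivity)
        have h2 : 2 * Real.sqrt Lψ * Real.sqrt (∫ x, S x ∂μ)
            ≤ 2 * Real.sqrt ((m₁ : ℝ) * Lψ) * Real.sqrt (∫ x, S x ∂μ) := by
          apply mul_le_mul_of_nonneg_right _ (Real.sqrt_nonneg _)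
          linarith [hsqrt_le]
        linarith
end
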